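/- Let K̃^k_s = Σ_{i,j} |G^s(i,j,k)⟩⟨G^s(i,j,k)| be the rank-4 projectors on (ℂ²)^{⊗3} and T̃^k_s = I ⊗ I ⊗ |(k⊕s)_⊢⟩⟨(k⊕s)_⊢|. Then c̃ = max_{k,k'} ‖√(K̃^{k'}_s) √(T̃^k_s)‖_∞² = 1/2. -/

import Mathlib

open Matrix
open scoped BigOperators ComplexOrder

noncomputable section

open Classical in

/-- Square root of a positive semidefinite matrix (junk value `0` otherwise). -/
noncomputable def matSqrt {n : Type*} [Fintype n] [DecidableEq n] (A : Matrix n n ℂ) :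
    Matrix n n ℂ :=
  if h : A.PosSemidef then
    (h.1.eigenvectorUnitary : Matrix n n ℂ) *
      diagonal ((↑) ∘ (Real.sqrt ·) ∘ h.1.eigenvalues) *
      (star h.1.eigenvectorUnitary : Matrix n n ℂ)
  else 0

/-- The operator (spectral) norm `‖·‖_∞` of a matrix. -/
noncomputable def specNorm {n : Type*} [Fintype n] [DecidableEq n] (A : Matrix n n ℂ) : ℝ :=
  ‖Matrix.toEuclideanCLM (𝕜 := ℂ) A‖

/-- `|G^s(i,j,k)⟩ = (1/√2) Σ_l (−1)^{l·(j⊕s)} |l, i⊕l, k⊕l⟩`. -/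
def GsFun (s i j k : Fin 2) : Fin 2 × Fin 2 × Fin 2 → ℂ := fun p =>
  ∑ l : Fin 2, ((1 / (Real.sqrt 2 : ℂ)) * (-1 : ℂ) ^ ((l : ℕ) * ((j + s : Fin 2) : ℕ))) *
    (if p = (l, i + l, k + l) then 1 else 0)

/-- The rank-4 projector `K̃^k_s = Σ_{i,j} |G^s(i,j,k)⟩⟨G^s(i,j,k)|`. -/
noncomputable def Ktil (s k : Fin 2) : Matrix (Fin 2 × Fin 2 × Fin 2) (Fin 2 × Fin 2 × Fin 2) ℂ :=
  Matrix.of fun p q => ∑ i : Fin 2, ∑ j : Fin 2, GsFun s i j k p * star (GsFun s i j k q)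

/-- The test projector `T̃^k_s = I ⊗ I ⊗ |(k⊕s)_⊢⟩⟨(k⊕s)_⊢|`. -/
noncomputable def Ttil (s k : Fin 2) : Matrix (Fin 2 × Fin 2 × Fin 2) (Fin 2 × Fin 2 × Fin 2) ℂ :=
  Matrix.of fun p q =>
    (if p.1 = q.1 then 1 else 0) * (if p.2.1 = q.2.1 then 1 else 0) *
      ((1 / 2 : ℂ) * (-1 : ℂ) ^ (((p.2.2 : ℕ) + (q.2.2 : ℕ)) * ((k + s : Fin 2) : ℕ)))

-- Auxiliary lemmas

lemma sqrt2_sq' : (Real.sqrt 2 : ℂ) * (Real.sqrt 2 : ℂ) = 2 := by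
  rw [← Complex.ofReal_mul, Real.mul_self_sqrt (by norm_num)]
  norm_num

lemma sqrt2_pow' : (Real.sqrt 2 : ℂ)^2 = 2 := by
  rw [pow_two]; exact sqrt2_sq'

lemma fin2_two_val' : ((2 : Fin 2) : ℕ) = 0 := rfl

lemma GsFun_eq (s i j k : Fin 2) (p : Fin 2 × Fin 2 × Fin 2) : GsFun s i j k p =
    ((1 / (Real.sqrt 2 : ℂ)) * (-1:ℂ)^((p.1:ℕ) * ((j+s:Fin 2):ℕ))) *
    (if p.2.1 = i + p.1 ∧ p.2.2 = k + p.1 then 1 else 0) := by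
  obtain ⟨a,b,c⟩ := p
  simp only [GsFun, Fin.sum_univ_two, Prod.mk.injEq]
  fin_cases a <;> simp [and_assoc]

lemma star_s2 : star (1 / (Real.sqrt 2 : ℂ)) = 1 / (Real.sqrt 2 : ℂ) := by
  simp [Complex.star_def, map_div₀, Complex.conj_ofReal]

lemma star_pm (n : ℕ) : star ((-1:ℂ)^n) = (-1:ℂ)^n := by
  simp [Complex.star_def, map_pow]

lemma star_ite01 (c : Prop) [Decidable c] : star (if c then (1:ℂ) else 0) = if c then 1 else 0 := by
  split <;> simp

lemma rearr (c e1 dp e2 dq : ℂ) :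
    (c * e1 * dp) * c * e2 * dq = ((c * e1) * (c * e2)) * (dp * dq) := by ring

lemma Jsum (a b s : Fin 2) :
    ∑ j : Fin 2, ((1 / (Real.sqrt 2 : ℂ)) * (-1:ℂ)^((a:ℕ)*((j+s:Fin 2):ℕ))) *
      ((1 / (Real.sqrt 2 : ℂ)) * (-1:ℂ)^((b:ℕ)*((j+s:Fin 2):ℕ))) = if a = b then 1 else 0 := by
  fin_cases a <;> fin_cases b <;> fin_cases s <;>
    norm_num [Fin.sum_univ_two, div_mul_div_comm, sqrt2_sq'] <;> ring_nf <;>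
    norm_num [sqrt2_pow', fin2_two_val', show (1 + 1 : Fin 2) = 0 from rfl]

lemma Isum (a b₁ c₁ b₂ c₂ k : Fin 2) :
    ∑ i : Fin 2, (if b₁ = i + a ∧ c₁ = k + a then (1:ℂ) else 0) *
        (if b₂ = i + a ∧ c₂ = k + a then 1 else 0) =
      if b₁ = b₂ ∧ c₁ = c₂ ∧ c₁ = k + a then 1 else 0 := by
  fin_cases a <;> fin_cases b₁ <;> fin_cases b₂ <;> fin_cases c₁ <;> fin_cases c₂ <;>
    fin_cases k <;> simp [Fin.sum_univ_two]

lemma Ktil_eq (s k : Fin 2) :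
    Ktil s k = Matrix.diagonal (fun p => if p.2.2 = k + p.1 then (1:ℂ) else 0) := by
  ext p q
  simp only [Ktil, Matrix.of_apply, GsFun_eq, star_mul', star_s2, star_pm, star_ite01,
    ← mul_assoc]
  simp_rw [rearr]
  rw [Finset.sum_comm]
  simp_rw [← Finset.mul_sum]
  rw [← Finset.sum_mul]
  rw [Jsum]
  obtain ⟨a, b, c⟩ := p
  obtain ⟨a', b', c'⟩ := q
  by_cases h : a = a'
  · subst h
    rw [Isum]
    by_cases h1 : b = b' <;> by_cases h2 : c = c' <;>
      simp [Matrix.diagonal, Prod.ext_iff, h1, h2]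
  · simp [Matrix.diagonal, Prod.ext_iff, h]

abbrev Kd (k : Fin 2) : Matrix (Fin 2 × Fin 2 × Fin 2) (Fin 2 × Fin 2 × Fin 2) ℂ :=
  Matrix.diagonal (fun p => if p.2.2 = k + p.1 then (1:ℂ) else 0)

lemma Kd_herm (k : Fin 2) : (Kd k)ᴴ = Kd k := by
  ext p q
  simp only [Matrix.conjTranspose_apply, Matrix.diagonal_apply]
  by_cases h : p = q
  · subst h
    simp only [if_pos rfl]
    split <;> simp
  · rw [if_neg h, if_neg (Ne.symm h), star_zero]

lemma Kd_idem (k : Fin 2) : Kd k * Kd k = Kd k := by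
  rw [Matrix.diagonal_mul_diagonal]
  ext p q
  simp only [Matrix.diagonal_apply]
  split_ifs <;> simp

lemma proj_psd {n : Type*} [Fintype n] [DecidableEq n] {P : Matrix n n ℂ}
    (hh : Pᴴ = P) (h2 : P * P = P) : P.PosSemidef := by
  have : P = Pᴴ * P := by rw [hh, h2]
  rw [this]
  exact Matrix.posSemidef_conjTranspose_mul_self P

set_option maxHeartbeats 2000000 in
lemma Ttil_herm (s k : Fin 2) : (Ttil s k)ᴴ = Ttil s k := by
  ext p q
  simp only [Matrix.conjTranspose_apply, Ttil, Matrix.of_apply]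
  generalize (k + s : Fin 2) = t
  fin_cases t <;> fin_cases p <;> fin_cases q <;> norm_num

set_option maxHeartbeats 8000000 in
lemma Ttil_idem (s k : Fin 2) : Ttil s k * Ttil s k = Ttil s k := by
  ext p q
  simp only [Matrix.mul_apply, Ttil, Matrix.of_apply]
  generalize (k + s : Fin 2) = t
  rw [Fintype.sum_prod_type]
  simp only [Fintype.sum_prod_type, Fin.sum_univ_two]
  fin_cases t <;> fin_cases p <;> fin_cases q <;> norm_num

lemma Ttil_ne (s k : Fin 2) : Ttil s k ≠ 0 := by
  intro h
  have h2 := congrFun (congrFun h ((0:Fin 2),(0:Fin 2),(0:Fin 2))) ((0:Fin 2),(0:Fin 2),(0:Fin 2))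
  simp [Ttil] at h2

set_option maxHeartbeats 16000000 in
lemma TKT (s k k' : Fin 2) :
    Ttil s k * Ktil s k' * Ttil s k = (1/2 : ℂ) • Ttil s k := by
  rw [Ktil_eq, Matrix.mul_assoc]
  ext p q
  rw [Matrix.smul_apply, Matrix.mul_apply]
  simp only [Matrix.diagonal_mul, Ttil, Matrix.of_apply, smul_eq_mul]
  generalize (k + s : Fin 2) = t
  simp only [Fintype.sum_prod_type, Fin.sum_univ_two]
  fin_cases t <;> fin_cases k' <;> fin_cases p <;> fin_cases q <;>
    norm_num [eq_true (show (0:Fin 2) = 1 + 1 by decide), eq_true (show (0:Fin 2) = 2 by decide), eq_false (show ¬(1:Fin 2) = 2 by decide)]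

lemma matSqrt_proj {n : Type*} [Fintype n] [DecidableEq n] {P : Matrix n n ℂ}
    (h : P.PosSemidef) (h2 : P * P = P) : matSqrt P = P := by
  rw [matSqrt, dif_pos h]
  have hspec := h.1.spectral_theorem
  rw [Unitary.conjStarAlgAut_apply] at hspec
  set U := h.1.eigenvectorUnitary with hU
  set D := diagonal (RCLike.ofReal ∘ h.1.eigenvalues : n → ℂ) with hD
  have hsu : (star U : Matrix n n ℂ) * (U : Matrix n n ℂ) = 1 := Unitary.coe_star_mul_self U
  have hus : (U : Matrix n n ℂ) * (star U : Matrix n n ℂ) = 1 := Unitary.coe_mul_star_self U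
  have hDP : D = (star U : Matrix n n ℂ) * P * U := by
    rw [hspec]
    simp only [← Matrix.mul_assoc, hsu, Matrix.one_mul]
    rw [Matrix.mul_assoc, hsu, Matrix.mul_one]
  have hDD : D * D = D := by
    rw [hDP]
    simp only [Matrix.mul_assoc]
    rw [← Matrix.mul_assoc (U : Matrix n n ℂ) (star U : Matrix n n ℂ), hus, Matrix.one_mul,
      ← Matrix.mul_assoc P P, h2]
  have hev : ∀ i, Real.sqrt (h.1.eigenvalues i) = h.1.eigenvalues i := by
    intro i
    have := congrFun (congrFun hDD i) i
    simp only [hD, diagonal_mul_diagonal, diagonal_apply_eq, Function.comp_apply] at this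
    have h' : h.1.eigenvalues i * h.1.eigenvalues i = h.1.eigenvalues i := by exact_mod_cast this
    have h0 : h.1.eigenvalues i * (h.1.eigenvalues i - 1) = 0 := by
      rw [mul_sub, mul_one, h', sub_self]
    rcases mul_eq_zero.1 h0 with h0 | h0
    · rw [h0, Real.sqrt_zero]
    · rw [sub_eq_zero.1 h0, Real.sqrt_one]
  have hfun : ((↑) ∘ (Real.sqrt ·) ∘ h.1.eigenvalues : n → ℂ) =
      RCLike.ofReal ∘ h.1.eigenvalues := by
    funext i
    simp only [Function.comp_apply, hev]
    rfl
  rw [hfun]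
  exact hspec.symm

set_option synthInstance.maxHeartbeats 400000 in
lemma norm_proj {n : Type*} [Fintype n] [DecidableEq n] {T : Matrix n n ℂ}
    (hh : Tᴴ = T) (h2 : T * T = T) (h0 : T ≠ 0) :
    ‖Matrix.toEuclideanCLM (𝕜 := ℂ) T‖ = 1 := by
  set u := Matrix.toEuclideanCLM (𝕜 := ℂ) T with hu
  have hstar : star u = u := by
    rw [hu, ← map_star]
    exact congrArg _ (by simpa [Matrix.star_eq_conjTranspose] using hh)
  have hmul : u * u = u := by rw [hu, ← _root_.map_mul, h2]
  have hnn : ‖u‖ * ‖u‖ = ‖u‖ := by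
    calc ‖u‖ * ‖u‖ = ‖star u * u‖ := (CStarRing.norm_star_mul_self (x := u)).symm
    _ = ‖u‖ := by rw [hstar, hmul]
  have hne : ‖u‖ ≠ 0 := by
    rw [norm_ne_zero_iff, hu]
    intro h
    exact h0 (by simpa using congrArg (Matrix.toEuclideanCLM (𝕜 := ℂ)).symm h)
  exact mul_right_cancel₀ hne (by rw [hnn, one_mul])

set_option synthInstance.maxHeartbeats 400000 in
lemma key_norm {n : Type*} [Fintype n] [DecidableEq n] {K T : Matrix n n ℂ}
    (hKpsd : K.PosSemidef) (hK2 : K * K = K)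
    (hTh : Tᴴ = T) (hTpsd : T.PosSemidef) (hT2 : T * T = T) (hT0 : T ≠ 0)
    (hTKT : T * K * T = (1/2 : ℂ) • T) :
    (specNorm (matSqrt K * matSqrt T)) ^ 2 = 1 / 2 := by
  rw [matSqrt_proj hKpsd hK2, matSqrt_proj hTpsd hT2]
  have hKh : Kᴴ = K := hKpsd.1
  have hmat : (K * T)ᴴ * (K * T) = (1/2 : ℂ) • T := by
    rw [Matrix.conjTranspose_mul, hKh, hTh]
    calc T * K * (K * T) = T * (K * K) * T := by noncomm_ring
    _ = T * K * T := by rw [hK2]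
    _ = (1/2 : ℂ) • T := hTKT
  have h1 : Matrix.toEuclideanCLM (𝕜 := ℂ) ((K * T)ᴴ * (K * T)) =
      star (Matrix.toEuclideanCLM (𝕜 := ℂ) (K * T)) * Matrix.toEuclideanCLM (𝕜 := ℂ) (K * T) := by
    rw [_root_.map_mul, ← map_star]
    rfl
  rw [specNorm, pow_two, ← CStarRing.norm_star_mul_self, ← h1, hmat, _root_.map_smul,
    norm_smul ((1:ℂ)/2) (Matrix.toEuclideanCLM (𝕜 := ℂ) T), norm_proj hTh hT2 hT0]
  norm_num

/-- The overlap `c̃ = max ‖√(K̃^{k'}_s) √(T̃^k_s)‖_∞²` equals `1/2`. -/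
theorem stmt17 (s : Fin 2) :
    IsGreatest
      {c : ℝ | ∃ k k' : Fin 2,
        c = (specNorm (matSqrt (Ktil s k') * matSqrt (Ttil s k))) ^ 2}
      (1 / 2) := by
  have hval : ∀ k k' : Fin 2,
      (specNorm (matSqrt (Ktil s k') * matSqrt (Ttil s k))) ^ 2 = 1 / 2 := by
    intro k k'
    have hK := Ktil_eq s k'
    refine key_norm ?_ ?_ (Ttil_herm s k) (proj_psd (Ttil_herm s k) (Ttil_idem s k))
      (Ttil_idem s k) (Ttil_ne s k) (TKT s k k')
    · rw [hK]; exact proj_psd (Kd_herm k') (Kd_idem k')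
    · rw [hK]; exact Kd_idem k'
  constructor
  · exact ⟨0, 0, (hval 0 0).symm⟩
  · rintro c ⟨k, k', rfl⟩
    rw [hval k k']
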